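/- Let μ be a partition with all parts ≥ 2, |μ| = k, ℓ(μ) parts, and let n ≥ k. Let I and A be perfect matchings of Fin (2n) with d(I,A) = 2(μ, 1^{n−k}), where (μ, 1^{n−k}) is the partition of n obtained from μ by appending n−k parts equal to 1. Then the number of permutations π of Fin (2n) of cycle type (μ, 1^{2n−k}) (i.e., whose nontrivial orbit sizes on Fin (2n) form the multiset of parts of μ) satisfying π I π⁻¹ = A is exactly 2^{ℓ(μ)}. -/

import Mathlib

open Equiv MulAction Finset

set_option linter.unusedSectionVars false
set_option maxHeartbeats 1000000

attribute [local instance] Classical.propDecidable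


/-- The multiset of cardinalities of the orbits of a subgroup of permutations
acting on a finite type. -/
noncomputable def orbitSizes {α : Type*} [Fintype α] (G : Subgroup (Equiv.Perm α)) :
    Multiset ℕ :=
  letI : Fintype (Quotient (MulAction.orbitRel G α)) := Fintype.ofFinite _
  (Finset.univ : Finset (Quotient (MulAction.orbitRel G α))).val.map
    fun q => Nat.card (MulAction.orbit G q.out)

/-- `d(A,B)`. -/
noncomputable def dMatch {N : ℕ} (A B : Equiv.Perm (Fin N)) : Multiset ℕ :=
  orbitSizes (Subgroup.closure {A, B})

/-- The multiset of sizes of the orbits of the cyclic group generated by a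
permutation (the cycle type, counting fixed points as parts equal to 1). -/
noncomputable def permOrbitSizes {N : ℕ} (π : Equiv.Perm (Fin N)) : Multiset ℕ :=
  orbitSizes (Subgroup.zpowers π)

/-- Doubling every part of a partition (as a multiset). -/
def twice (m : Multiset ℕ) : Multiset ℕ := m.map (fun i => 2 * i)

/-- Perfect matchings of the complete graph on `Fin N`. -/
abbrev PerfMatching (N : ℕ) := {A : Equiv.Perm (Fin N) // A * A = 1 ∧ ∀ x, A x ≠ x}


section Aux

variable {α : Type*} [Fintype α] [DecidableEq α]

/-- Context: `I`, `A` are fixed-point-free involutions. -/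
structure MCtx (I A : Equiv.Perm α) : Prop where
  hI : I * I = 1
  hIf : ∀ x, I x ≠ x
  hA : A * A = 1
  hAf : ∀ x, A x ≠ x

variable {I A : Equiv.Perm α}

lemma MCtx.II (hc : MCtx I A) (x : α) : I (I x) = x := by
  have := Equiv.ext_iff.1 hc.hI x
  simpa [Equiv.Perm.mul_apply] using this

lemma MCtx.AA (hc : MCtx I A) (x : α) : A (A x) = x := by
  have := Equiv.ext_iff.1 hc.hA x
  simpa [Equiv.Perm.mul_apply] using this

lemma MCtx.Iinv (hc : MCtx I A) : I⁻¹ = I := inv_eq_of_mul_eq_one_right hc.hI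

lemma MCtx.Ainv (hc : MCtx I A) : A⁻¹ = A := inv_eq_of_mul_eq_one_right hc.hA

lemma MCtx.sg_inv (hc : MCtx I A) : (A * I)⁻¹ = I * A := by
  rw [mul_inv_rev, hc.Iinv, hc.Ainv]

lemma MCtx.conj_sg (hc : MCtx I A) : I * (A * I) * I⁻¹ = (A * I)⁻¹ := by
  rw [hc.Iinv, hc.sg_inv]
  calc I * (A * I) * I = I * A * (I * I) := by group
  _ = I * A := by rw [hc.hI, mul_one]

lemma MCtx.I_zpow (hc : MCtx I A) (t : ℤ) : I * (A * I) ^ t = (A * I) ^ (-t) * I := by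
  have h : ((A * I)⁻¹) ^ t = (I * (A * I) * I⁻¹) ^ t := by rw [hc.conj_sg]
  rw [conj_zpow, inv_zpow, ← zpow_neg] at h
  rw [h, hc.Iinv]
  calc I * (A*I)^t = I * (A*I)^t * (I * I) := by rw [hc.hI, mul_one]
  _ = I * (A * I) ^ t * I * I := by group

lemma MCtx.I_zpow_apply (hc : MCtx I A) (t : ℤ) (x : α) :
    I (((A * I) ^ t) x) = ((A * I) ^ (-t)) (I x) := by
  have := Equiv.ext_iff.1 (hc.I_zpow t) x
  simpa [Equiv.Perm.mul_apply] using this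

lemma MCtx.A_eq (hc : MCtx I A) (x : α) : A x = (A * I) (I x) := by
  simp [Equiv.Perm.mul_apply, hc.II]

lemma MCtx.sgfix_iff (hc : MCtx I A) (x : α) : (A * I) x = x ↔ I x = A x := by
  constructor
  · intro h
    have : A ((A * I) x) = A x := by rw [h]
    simp only [Equiv.Perm.mul_apply, hc.AA] at this
    exact this
  · intro h
    simp only [Equiv.Perm.mul_apply]
    rw [h]
    exact hc.AA x

lemma MCtx.parity (hc : MCtx I A) (x : α) (t : ℤ) : ((A * I) ^ t) x ≠ I x := by
  intro h
  rcases Int.even_or_odd t with ⟨s, hs⟩ | ⟨s, hs⟩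
  · apply hc.hIf (((A * I) ^ s) x)
    rw [hc.I_zpow_apply, ← h, ← Equiv.Perm.mul_apply, ← zpow_add]
    have he : -s + t = s := by omega
    rw [he]
  · apply hc.hAf (((A * I) ^ (s + 1)) x)
    rw [hc.A_eq (((A * I) ^ (s + 1)) x), hc.I_zpow_apply, ← h,
      ← Equiv.Perm.mul_apply, ← Equiv.Perm.mul_apply, ← zpow_one_add, ← zpow_add]
    have he : 1 + -(s+1) + t = s + 1 := by omega
    rw [he]


/-- The dihedral relation generated by `I`, `A`. -/
def MRel (I A : Equiv.Perm α) (x y : α) : Prop :=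
  ∃ t : ℤ, y = ((A * I) ^ t) x ∨ y = ((A * I) ^ t) (I x)

lemma MRel.refl (x : α) : MRel I A x x := ⟨0, Or.inl (by simp)⟩

lemma MRel.sg {x y : α} (h : MRel I A x y) : MRel I A x ((A * I) y) := by
  obtain ⟨t, h | h⟩ := h
  · exact ⟨1 + t, Or.inl (by rw [h, ← Equiv.Perm.mul_apply, ← zpow_one_add])⟩
  · exact ⟨1 + t, Or.inr (by rw [h, ← Equiv.Perm.mul_apply, ← zpow_one_add])⟩

lemma MRel.appI (hc : MCtx I A) {x y : α} (h : MRel I A x y) : MRel I A x (I y) := by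
  obtain ⟨t, h | h⟩ := h
  · exact ⟨-t, Or.inr (by rw [h, hc.I_zpow_apply])⟩
  · exact ⟨-t, Or.inl (by rw [h, hc.I_zpow_apply, hc.II])⟩

lemma MRel.symm (hc : MCtx I A) {x y : α} (h : MRel I A x y) : MRel I A y x := by
  obtain ⟨t, h | h⟩ := h
  · refine ⟨-t, Or.inl ?_⟩
    rw [h, ← Equiv.Perm.mul_apply, ← zpow_add]
    simp
  · refine ⟨t, Or.inr ?_⟩
    rw [h, hc.I_zpow_apply, hc.II, ← Equiv.Perm.mul_apply, ← zpow_add]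
    simp

lemma MRel.trans (hc : MCtx I A) {x y z : α} (h1 : MRel I A x y) (h2 : MRel I A y z) :
    MRel I A x z := by
  obtain ⟨a, h1 | h1⟩ := h1 <;> obtain ⟨b, h2 | h2⟩ := h2
  · exact ⟨b + a, Or.inl (by rw [h2, h1, ← Equiv.Perm.mul_apply, ← zpow_add])⟩
  · refine ⟨b + -a, Or.inr ?_⟩
    rw [h2, h1, hc.I_zpow_apply, ← Equiv.Perm.mul_apply, ← zpow_add]
  · refine ⟨b + a, Or.inr ?_⟩
    rw [h2, h1, ← Equiv.Perm.mul_apply, ← zpow_add]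
  · refine ⟨b + -a, Or.inl ?_⟩
    rw [h2, h1, hc.I_zpow_apply, hc.II, ← Equiv.Perm.mul_apply, ← zpow_add]

/-- The orbit of the `zpowers` subgroup, i.e. a cycle of a permutation, as a set. -/
def Zorb (P : Equiv.Perm α) (x : α) : Set α := MulAction.orbit (Subgroup.zpowers P) x

lemma mem_Zorb {P : Equiv.Perm α} {x y : α} : y ∈ Zorb P x ↔ ∃ t : ℤ, (P ^ t) x = y := by
  unfold Zorb
  constructor
  · rintro ⟨⟨g, hg⟩, rfl⟩
    obtain ⟨t, rfl⟩ := Subgroup.mem_zpowers_iff.1 hg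
    exact ⟨t, rfl⟩
  · rintro ⟨t, rfl⟩
    exact ⟨⟨P ^ t, Subgroup.zpow_mem _ (Subgroup.mem_zpowers P) t⟩, rfl⟩

lemma self_mem_Zorb {P : Equiv.Perm α} {x : α} : x ∈ Zorb P x := MulAction.mem_orbit_self x

lemma Zorb_eq_of_mem {P : Equiv.Perm α} {x y : α} (h : y ∈ Zorb P x) : Zorb P x = Zorb P y :=
  (MulAction.orbit_eq_iff.2 h).symm

lemma apply_mem_Zorb {P : Equiv.Perm α} {x y : α} (h : y ∈ Zorb P x) : P y ∈ Zorb P x := by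
  obtain ⟨t, rfl⟩ := mem_Zorb.1 h
  exact mem_Zorb.2 ⟨1 + t, by rw [← Equiv.Perm.mul_apply, ← zpow_one_add]⟩

lemma apply_mem_Zorb_iff {P : Equiv.Perm α} {x y : α} : P y ∈ Zorb P x ↔ y ∈ Zorb P x := by
  constructor
  · intro h
    obtain ⟨t, ht⟩ := mem_Zorb.1 h
    refine mem_Zorb.2 ⟨-1 + t, ?_⟩
    calc ((P ^ (-1 + t : ℤ))) x = (P⁻¹ * P ^ t) x := by rw [zpow_add, zpow_neg_one]
    _ = P⁻¹ ((P ^ t) x) := by rw [Equiv.Perm.mul_apply]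
    _ = P⁻¹ (P y) := by rw [ht]
    _ = y := by simp
  · exact apply_mem_Zorb

lemma Zorb_fixed {P : Equiv.Perm α} {x : α} (h : P x = x) : Zorb P x = {x} := by
  ext y
  simp only [Set.mem_singleton_iff, mem_Zorb]
  constructor
  · rintro ⟨t, rfl⟩
    exact (Function.IsFixedPt.perm_zpow h t)
  · rintro rfl
    exact ⟨0, by simp⟩

/-- The size of a cycle of `P`. -/
noncomputable def zsize (P : Equiv.Perm α) (x : α) : ℕ := (Zorb P x).ncard

lemma Natcard_orbit_zpowers (P : Equiv.Perm α) (x : α) :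
    Nat.card (MulAction.orbit (Subgroup.zpowers P) x) = zsize P x :=
  (Nat.card_coe_set_eq _)

lemma zsize_eq_of_mem {P : Equiv.Perm α} {x y : α} (h : y ∈ Zorb P x) : zsize P x = zsize P y := by
  unfold zsize; rw [Zorb_eq_of_mem h]

lemma zsize_eq_one_iff {P : Equiv.Perm α} {x : α} : zsize P x = 1 ↔ P x = x := by
  constructor
  · intro h
    obtain ⟨a, ha⟩ := Set.ncard_eq_one.1 h
    have h1 : x ∈ Zorb P x := self_mem_Zorb
    have h2 : P x ∈ Zorb P x := apply_mem_Zorb self_mem_Zorb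
    rw [ha] at h1 h2
    simp only [Set.mem_singleton_iff] at h1 h2
    rw [h1] at h2 ⊢
    exact h2
  · intro h
    unfold zsize
    rw [Zorb_fixed h, Set.ncard_singleton]

lemma orbitcard_one_iff {P : Equiv.Perm α} {x : α} :
    Nat.card (MulAction.orbit (Subgroup.zpowers P) x) = 1 ↔ P x = x := by
  rw [Natcard_orbit_zpowers, zsize_eq_one_iff]


lemma rel_cases {x y : α} (h : MRel I A x y) :
    y ∈ Zorb (A * I) x ∨ y ∈ Zorb (A * I) (I x) := by
  obtain ⟨t, h | h⟩ := h
  · exact Or.inl (mem_Zorb.2 ⟨t, h.symm⟩)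
  · exact Or.inr (mem_Zorb.2 ⟨t, h.symm⟩)

lemma rel_of_mem_Zorb {x y : α} (h : y ∈ Zorb (A * I) x) : MRel I A x y := by
  obtain ⟨t, ht⟩ := mem_Zorb.1 h
  exact ⟨t, Or.inl ht.symm⟩

lemma rel_of_mem_Zorb_I {x y : α} (h : y ∈ Zorb (A * I) (I x)) : MRel I A x y := by
  obtain ⟨t, ht⟩ := mem_Zorb.1 h
  exact ⟨t, Or.inr ht.symm⟩

lemma Zorb_disj (hc : MCtx I A) (x : α) : Disjoint (Zorb (A * I) x) (Zorb (A * I) (I x)) := by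
  rw [Set.disjoint_left]
  rintro z hz1 hz2
  obtain ⟨a, ha⟩ := mem_Zorb.1 hz1
  obtain ⟨b, hb⟩ := mem_Zorb.1 hz2
  have : ((A * I) ^ (-b + a)) x = I x := by
    have h1 : ((A * I) ^ (-b : ℤ)) (((A * I) ^ a) x) = ((A * I) ^ (-b : ℤ)) (((A * I) ^ b) (I x)) := by
      rw [ha, hb]
    rw [← Equiv.Perm.mul_apply, ← Equiv.Perm.mul_apply, ← zpow_add, ← zpow_add] at h1
    simpa using h1
  exact hc.parity x (-b + a) this

lemma I_image_Zorb (hc : MCtx I A) (x : α) :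
    I '' Zorb (A * I) x = Zorb (A * I) (I x) := by
  ext y
  simp only [Set.mem_image, mem_Zorb]
  constructor
  · rintro ⟨z, ⟨t, rfl⟩, rfl⟩
    exact ⟨-t, (hc.I_zpow_apply t x).symm⟩
  · rintro ⟨t, rfl⟩
    exact ⟨((A * I) ^ (-t : ℤ)) x, ⟨-t, rfl⟩, by rw [hc.I_zpow_apply]; simp⟩

lemma zsize_I (hc : MCtx I A) (x : α) : zsize (A * I) (I x) = zsize (A * I) x := by
  unfold zsize
  rw [← I_image_Zorb hc, Set.ncard_image_of_injective _ I.injective]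

lemma rel_zsize (hc : MCtx I A) {x y : α} (h : MRel I A x y) :
    zsize (A * I) y = zsize (A * I) x := by
  rcases rel_cases h with h' | h'
  · exact (zsize_eq_of_mem h').symm
  · rw [← zsize_eq_of_mem h', zsize_I hc]

lemma rel_fix_iff (hc : MCtx I A) {x y : α} (h : MRel I A x y) :
    ((A * I) x = x ↔ (A * I) y = y) := by
  rw [← zsize_eq_one_iff, ← zsize_eq_one_iff, rel_zsize hc h]

lemma mem_closure_I : I ∈ Subgroup.closure {I, A} :=
  Subgroup.subset_closure (by simp)

lemma mem_closure_A : A ∈ Subgroup.closure {I, A} :=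
  Subgroup.subset_closure (by simp)

lemma mem_closure_sg : A * I ∈ Subgroup.closure {I, A} :=
  mul_mem mem_closure_A mem_closure_I

lemma rel_orbit_eq (hc : MCtx I A) (x : α) :
    MulAction.orbit (Subgroup.closure {I, A}) x = {y | MRel I A x y} := by
  ext y
  constructor
  · rintro ⟨⟨g, hg⟩, rfl⟩
    have key : ∀ (g : Equiv.Perm α), g ∈ Subgroup.closure {I, A} →
        (∀ z, MRel I A x z → MRel I A x (g z)) ∧
        (∀ z, MRel I A x z → MRel I A x (g⁻¹ z)) := by
      intro g hg
      induction hg using Subgroup.closure_induction with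
      | mem g hgmem =>
        rcases hgmem with rfl | rfl
        · constructor
          · exact fun z hz => hz.appI hc
          · intro z hz
            rw [hc.Iinv]
            exact hz.appI hc
        · constructor
          · intro z hz
            rw [hc.A_eq]
            exact (hz.appI hc).sg
          · intro z hz
            rw [hc.Ainv, hc.A_eq]
            exact (hz.appI hc).sg
      | one => simp only [inv_one]; exact ⟨fun z hz => by simpa using hz, fun z hz => by simpa using hz⟩
      | mul g h hgc hhc ihg ihh =>
        constructor
        · intro z hz
          rw [Equiv.Perm.mul_apply]
          exact ihg.1 _ (ihh.1 _ hz)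
        · intro z hz
          rw [mul_inv_rev, Equiv.Perm.mul_apply]
          exact ihh.2 _ (ihg.2 _ hz)
      | inv g hgc ihg =>
        refine ⟨ihg.2, ?_⟩
        rw [inv_inv]
        exact ihg.1
    show MRel I A x ((⟨g, hg⟩ : Subgroup.closure {I, A}) • x)
    exact (key g hg).1 x (MRel.refl x)
  · intro hy
    rcases hy with ⟨t, ht | ht⟩
    · exact ⟨⟨(A * I) ^ t, Subgroup.zpow_mem _ mem_closure_sg t⟩, ht.symm⟩
    · exact ⟨⟨(A * I) ^ t * I, mul_mem (Subgroup.zpow_mem _ mem_closure_sg t) mem_closure_I⟩,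
        ht.symm⟩

lemma Gorb_eq (hc : MCtx I A) (x : α) :
    MulAction.orbit (Subgroup.closure {I, A}) x = Zorb (A * I) x ∪ Zorb (A * I) (I x) := by
  rw [rel_orbit_eq hc]
  ext y
  constructor
  · exact fun h => rel_cases h
  · rintro (h | h)
    · exact rel_of_mem_Zorb h
    · exact rel_of_mem_Zorb_I h

lemma Gcard (hc : MCtx I A) (x : α) :
    Nat.card (MulAction.orbit (Subgroup.closure {I, A}) x) = 2 * zsize (A * I) x := by
  rw [Nat.card_coe_set_eq, Gorb_eq hc,
    Set.ncard_union_eq (Zorb_disj hc x) (Set.toFinite _) (Set.toFinite _)]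
  show zsize (A * I) x + zsize (A * I) (I x) = 2 * zsize (A * I) x
  rw [zsize_I hc]
  ring

lemma msmall_iff (hc : MCtx I A) (x : α) :
    Nat.card (MulAction.orbit (Subgroup.closure {I, A}) x) = 2 ↔ (A * I) x = x := by
  rw [Gcard hc, ← zsize_eq_one_iff]
  omega

lemma rel_of_orbitRel (hc : MCtx I A) {x y : α}
    (h : Setoid.r (self := MulAction.orbitRel (Subgroup.closure {I, A}) α) x y) :
    MRel I A y x := by
  have := MulAction.orbitRel_apply.1 h
  rw [rel_orbit_eq hc] at this
  exact this

lemma orbitRel_of_rel (hc : MCtx I A) {x y : α} (h : MRel I A y x) :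
    Setoid.r (self := MulAction.orbitRel (Subgroup.closure {I, A}) α) x y := by
  apply MulAction.orbitRel_apply.2
  rw [rel_orbit_eq hc]
  exact h


noncomputable local instance fintypeOrbitQuot (G : Subgroup (Equiv.Perm α)) :
    Fintype (Quotient (MulAction.orbitRel G α)) := Fintype.ofFinite _

lemma orbitSizes_eq (G : Subgroup (Equiv.Perm α)) :
    orbitSizes G = (Finset.univ : Finset (Quotient (MulAction.orbitRel G α))).val.map
      (fun q => Nat.card (MulAction.orbit G q.out)) := by
  unfold orbitSizes
  congr!

lemma orbitSizes_sum (G : Subgroup (Equiv.Perm α)) :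
    (orbitSizes G).sum = Fintype.card α := by
  rw [orbitSizes_eq]
  have h1 : ((Finset.univ.val.map fun q : Quotient (MulAction.orbitRel G α) =>
      Nat.card (MulAction.orbit G q.out))).sum
      = ∑ q : Quotient (MulAction.orbitRel G α), Nat.card (MulAction.orbit G q.out) := rfl
  rw [h1]
  calc ∑ q : Quotient (MulAction.orbitRel G α), Nat.card (MulAction.orbit G q.out)
      = ∑ q : Quotient (MulAction.orbitRel G α), Fintype.card (MulAction.orbit G q.out) := by
        apply Finset.sum_congr rfl
        intro q _
        exact Nat.card_eq_fintype_card
  _ = Fintype.card (Σ ω : MulAction.orbitRel.Quotient G α, MulAction.orbit G ω.out) := by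
        rw [Fintype.card_sigma]
  _ = Fintype.card α := (Fintype.card_congr (MulAction.selfEquivSigmaOrbits G α)).symm

lemma count_one_orbitSizes (P : Equiv.Perm α) :
    (orbitSizes (Subgroup.zpowers P)).count 1
      = (Finset.univ.filter fun x => P x = x).card := by
  rw [orbitSizes_eq, Multiset.count_map]
  have h1 : Multiset.card (Multiset.filter
      (fun q : Quotient (MulAction.orbitRel (Subgroup.zpowers P) α) =>
        1 = Nat.card (MulAction.orbit (Subgroup.zpowers P) q.out)) Finset.univ.val)
      = (Finset.univ.filter (fun q : Quotient (MulAction.orbitRel (Subgroup.zpowers P) α) =>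
        1 = Nat.card (MulAction.orbit (Subgroup.zpowers P) q.out))).card := rfl
  rw [h1]
  apply Finset.card_bij (fun q _ => q.out)
  · intro q hq
    simp only [Finset.mem_filter, Finset.mem_univ, true_and] at hq ⊢
    exact orbitcard_one_iff.1 hq.symm
  · intro q1 h1 q2 h2 h
    exact Quotient.out_injective h
  · intro x hx
    simp only [Finset.mem_filter, Finset.mem_univ, true_and] at hx
    have hout : (Quotient.mk (MulAction.orbitRel (Subgroup.zpowers P) α) x).out
        ∈ Zorb P x := by
      have := Quotient.exact
        (Quotient.out_eq (Quotient.mk (MulAction.orbitRel (Subgroup.zpowers P) α) x))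
      exact MulAction.orbitRel_apply.1 this
    rw [Zorb_fixed hx] at hout
    simp only [Set.mem_singleton_iff] at hout
    refine ⟨Quotient.mk _ x, ?_, hout⟩
    simp only [Finset.mem_filter, Finset.mem_univ, true_and]
    rw [hout]
    exact (orbitcard_one_iff.2 hx).symm


lemma rel_rep (hc : MCtx I A) (x : α) :
    MRel I A x (Quotient.mk (MulAction.orbitRel (Subgroup.closure {I, A}) α) x).out := by
  have h := Quotient.exact
    (Quotient.out_eq (Quotient.mk (MulAction.orbitRel (Subgroup.closure {I, A}) α) x))
  exact rel_of_orbitRel hc h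

lemma fixsg_card (hc : MCtx I A) :
    (Finset.univ.filter fun x => (A * I) x = x).card
      = 2 * (orbitSizes (Subgroup.closure {I, A})).count 2 := by
  rw [orbitSizes_eq, Multiset.count_map]
  have h1 : Multiset.card (Multiset.filter
      (fun q : Quotient (MulAction.orbitRel (Subgroup.closure {I, A}) α) =>
        2 = Nat.card (MulAction.orbit (Subgroup.closure {I, A}) q.out)) Finset.univ.val)
      = (Finset.univ.filter
        (fun q : Quotient (MulAction.orbitRel (Subgroup.closure {I, A}) α) =>
        2 = Nat.card (MulAction.orbit (Subgroup.closure {I, A}) q.out))).card := rfl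
  rw [h1]
  have hmem : ∀ x ∈ Finset.univ.filter (fun x => (A * I) x = x),
      Quotient.mk (MulAction.orbitRel (Subgroup.closure {I, A}) α) x ∈
      Finset.univ.filter
        (fun q : Quotient (MulAction.orbitRel (Subgroup.closure {I, A}) α) =>
        2 = Nat.card (MulAction.orbit (Subgroup.closure {I, A}) q.out)) := by
    intro x hx
    simp only [Finset.mem_filter, Finset.mem_univ, true_and] at hx ⊢
    have hrel := rel_rep hc x
    have : (A * I) (Quotient.mk (MulAction.orbitRel (Subgroup.closure {I, A}) α) x).out
        = (Quotient.mk (MulAction.orbitRel (Subgroup.closure {I, A}) α) x).out :=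
      (rel_fix_iff hc hrel).1 hx
    exact ((msmall_iff hc _).2 this).symm
  rw [Finset.card_eq_sum_card_fiberwise hmem]
  have hfib : ∀ q ∈ Finset.univ.filter
      (fun q : Quotient (MulAction.orbitRel (Subgroup.closure {I, A}) α) =>
        2 = Nat.card (MulAction.orbit (Subgroup.closure {I, A}) q.out)),
      ((Finset.univ.filter fun x => (A * I) x = x).filter
        (fun x => Quotient.mk (MulAction.orbitRel (Subgroup.closure {I, A}) α) x = q)).card
        = 2 := by
    intro q hq
    simp only [Finset.mem_filter, Finset.mem_univ, true_and] at hq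
    have hz : (A * I) q.out = q.out := (msmall_iff hc _).1 hq.symm
    have hzI : (A * I) (I q.out) = I q.out := by
      have h2 : I q.out = A q.out := (hc.sgfix_iff q.out).1 hz
      calc (A * I) (I q.out) = A (I (I q.out)) := rfl
      _ = A q.out := by rw [hc.II]
      _ = I q.out := h2.symm
    have hset : ((Finset.univ.filter fun x => (A * I) x = x).filter
        (fun x => Quotient.mk (MulAction.orbitRel (Subgroup.closure {I, A}) α) x = q))
        = {q.out, I q.out} := by
      ext y
      simp only [Finset.mem_filter, Finset.mem_univ, true_and, Finset.mem_insert,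
        Finset.mem_singleton]
      constructor
      · rintro ⟨hy1, hy2⟩
        have : Quotient.mk (MulAction.orbitRel (Subgroup.closure {I, A}) α) y
            = Quotient.mk (MulAction.orbitRel (Subgroup.closure {I, A}) α) q.out := by
          rw [hy2, Quotient.out_eq]
        have hrel : MRel I A q.out y := rel_of_orbitRel hc (Quotient.exact this)
        rcases rel_cases hrel with h' | h'
        · rw [Zorb_fixed hz] at h'
          exact Or.inl h'
        · rw [Zorb_fixed hzI] at h'
          exact Or.inr h'
      · rintro (rfl | rfl)
        · exact ⟨hz, Quotient.out_eq q⟩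
        · refine ⟨hzI, ?_⟩
          have : Quotient.mk (MulAction.orbitRel (Subgroup.closure {I, A}) α) (I q.out)
              = Quotient.mk (MulAction.orbitRel (Subgroup.closure {I, A}) α) q.out := by
            apply Quotient.sound
            exact MulAction.orbitRel_apply.2 ⟨⟨I, mem_closure_I⟩, rfl⟩
          rw [this, Quotient.out_eq]
    rw [hset]
    exact Finset.card_pair (Ne.symm (hc.hIf q.out))
  rw [Finset.sum_congr rfl hfib, Finset.sum_const, smul_eq_mul, mul_comm]

/-- The "big" (size `≥ 4`) orbits of the dihedral group generated by two matchings. -/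
abbrev BigQ (I A : Equiv.Perm α) : Type _ :=
  {q : Quotient (MulAction.orbitRel (Subgroup.closure {I, A} : Subgroup (Equiv.Perm α)) α) //
    Nat.card (MulAction.orbit (Subgroup.closure {I, A} : Subgroup (Equiv.Perm α)) q.out) ≠ 2}

noncomputable local instance (I A : Equiv.Perm α) : Fintype (BigQ I A) := Fintype.ofFinite _

lemma big_part (hc : MCtx I A) :
    (Finset.univ : Finset (BigQ I A)).val.map (fun q => 2 * zsize (A * I) q.1.out)
      = (orbitSizes (Subgroup.closure {I, A})).filter (fun m => m ≠ 2) := by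
  rw [orbitSizes_eq, Multiset.filter_map]
  have hsub : (Finset.univ : Finset (BigQ I A)).map (Function.Embedding.subtype _)
      = Finset.univ.filter
        (fun q : Quotient (MulAction.orbitRel (Subgroup.closure {I, A}) α) =>
          Nat.card (MulAction.orbit (Subgroup.closure {I, A}) q.out) ≠ 2) := by
    ext q
    simp only [Finset.mem_map, Finset.mem_univ, true_and, Function.Embedding.coe_subtype,
      Finset.mem_filter]
    constructor
    · rintro ⟨⟨a, ha⟩, rfl⟩
      exact ha
    · intro h
      exact ⟨⟨q, h⟩, rfl⟩
  have : Multiset.filter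
      ((fun m => m ≠ 2) ∘ (fun q : Quotient (MulAction.orbitRel (Subgroup.closure {I, A}) α) =>
        Nat.card (MulAction.orbit (Subgroup.closure {I, A}) q.out)))
      (Finset.univ.val)
      = (Finset.univ.filter
        (fun q : Quotient (MulAction.orbitRel (Subgroup.closure {I, A}) α) =>
          Nat.card (MulAction.orbit (Subgroup.closure {I, A}) q.out) ≠ 2)).val := by
    rw [Finset.filter_val]
    rfl
  rw [this, ← hsub, Finset.map_val, Multiset.map_map]
  apply Multiset.map_congr rfl
  intro q _
  simp only [Function.comp_apply, Function.Embedding.coe_subtype]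
  exact (Gcard hc q.1.out).symm


/-- Valid supports: `σ`-invariant sets of non-fixed points of `σ = A*I` containing exactly one
of each pair of paired-up cycles of `σ`. -/
def GoodS (I A : Equiv.Perm α) (S : Finset α) : Prop :=
  (∀ x ∈ S, (A * I) x ≠ x) ∧ (∀ x ∈ S, (A * I) x ∈ S) ∧
    (∀ x, (A * I) x ≠ x → (x ∈ S ↔ I x ∉ S))

lemma GoodS.inv_mem {S : Finset α} (hS : GoodS I A S) :
    ∀ x ∈ S, (A * I)⁻¹ x ∈ S := by
  have himg : S.image (fun x => (A * I) x) = S := by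
    apply Finset.eq_of_subset_of_card_le
    · intro y hy
      obtain ⟨x, hx, rfl⟩ := Finset.mem_image.1 hy
      exact hS.2.1 x hx
    · rw [Finset.card_image_of_injective _ (A * I).injective]
  intro x hx
  rw [← himg] at hx
  obtain ⟨y, hy, hyx⟩ := Finset.mem_image.1 hx
  have : (A * I)⁻¹ x = y := by rw [← hyx]; simp
  rw [this]
  exact hy

/-- The permutation acting as `A*I` on `S` and fixing everything else. -/
noncomputable def piS (I A : Equiv.Perm α) (S : Finset α) (hS : GoodS I A S) : Equiv.Perm α where
  toFun x := if x ∈ S then (A * I) x else x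
  invFun x := if x ∈ S then (A * I)⁻¹ x else x
  left_inv := by
    intro x
    by_cases h : x ∈ S
    · simp only [h, if_pos, if_pos (hS.2.1 x h)]
      simp
    · simp [h]
  right_inv := by
    intro x
    by_cases h : x ∈ S
    · simp only [h, if_pos, if_pos (hS.inv_mem x h)]
      simp
    · simp [h]

lemma piS_apply_mem {S : Finset α} (hS : GoodS I A S) {x : α} (h : x ∈ S) :
    piS I A S hS x = (A * I) x := by
  simp [piS, h]

lemma piS_apply_not_mem {S : Finset α} (hS : GoodS I A S) {x : α} (h : x ∉ S) :
    piS I A S hS x = x := by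
  simp [piS, h]

lemma piS_ne_iff {S : Finset α} (hS : GoodS I A S) (x : α) :
    piS I A S hS x ≠ x ↔ x ∈ S := by
  by_cases h : x ∈ S
  · simp only [h, iff_true, piS_apply_mem hS h]
    exact hS.1 x h
  · simp [piS_apply_not_mem hS h, h]

lemma sg_fix_I (hc : MCtx I A) {x : α} (h : (A * I) x ≠ x) : (A * I) (I x) ≠ I x := by
  intro hfix
  apply h
  have h1 : (A * I) (I x) = A x := by
    show A (I (I x)) = A x
    rw [hc.II]
  have h2 : A x = I x := by rw [← h1, hfix]
  exact (hc.sgfix_iff x).2 h2.symm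

lemma piS_conj (hc : MCtx I A) {S : Finset α} (hS : GoodS I A S) :
    piS I A S hS * I * (piS I A S hS)⁻¹ = A := by
  rw [mul_inv_eq_iff_eq_mul]
  ext x
  rw [Equiv.Perm.mul_apply, Equiv.Perm.mul_apply]
  by_cases hfix : (A * I) x = x
  · have hxS : x ∉ S := fun h => hS.1 x h hfix
    have hIxS : I x ∉ S := by
      intro h
      have := hS.1 (I x) h
      exact this ((rel_fix_iff hc (MRel.appI hc (MRel.refl x))).1 hfix)
    rw [piS_apply_not_mem hS hIxS, piS_apply_not_mem hS hxS]
    exact (hc.sgfix_iff x).1 hfix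
  · by_cases hxS : x ∈ S
    · have hIxS : I x ∉ S := (hS.2.2 x hfix).1 hxS
      rw [piS_apply_not_mem hS hIxS, piS_apply_mem hS hxS]
      show I x = A ((A * I) x)
      calc I x = A (A (I x)) := (hc.AA _).symm
      _ = A ((A * I) x) := rfl
    · have hIxS : I x ∈ S := by
        by_contra hne
        exact hxS ((hS.2.2 x hfix).2 hne)
      rw [piS_apply_mem hS hIxS, piS_apply_not_mem hS hxS]
      show (A * I) (I x) = A x
      calc (A * I) (I x) = A (I (I x)) := rfl
      _ = A x := by rw [hc.II]


lemma forward (hc : MCtx I A) {π : Equiv.Perm α} {k : ℕ}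
    (hfixpi : (Finset.univ.filter fun x => π x = x).card + k = Fintype.card α)
    (hfixsg : (Finset.univ.filter fun x => (A * I) x = x).card + 2 * k = Fintype.card α)
    (hconj : ∀ x, π (I x) = A (π x)) :
    GoodS I A (Finset.univ.filter fun x => π x ≠ x) ∧
      ∀ x, π x ≠ x → π x = (A * I) x := by
  classical
  set Fp := Finset.univ.filter (fun x => π x = x) with hFp
  set Sp := Finset.univ.filter (fun x => π x ≠ x) with hSp
  have hcards : Fp.card + Sp.card = Fintype.card α := by
    rw [hFp, hSp, ← Finset.card_univ]
    exact Finset.card_filter_add_card_filter_not (p := fun x => π x = x)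
  have hSpk : Sp.card = k := by omega
  set T := Fp.filter (fun x => (A * I) x ≠ x) with hT
  have hTcard : k ≤ T.card := by
    have hsplit := Finset.card_filter_add_card_filter_not
      (s := Fp) (p := fun x => (A * I) x = x)
    have hsub : Fp.filter (fun x => (A * I) x = x)
        ⊆ Finset.univ.filter (fun x => (A * I) x = x) := by
      intro x hx
      simp only [Finset.mem_filter, hFp] at hx ⊢
      exact ⟨Finset.mem_univ x, hx.2⟩
    have hle := Finset.card_le_card hsub
    have hTc : (Fp.filter (fun x => ¬(A * I) x = x)).card = T.card := rfl
    omega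
  have hmapsto : ∀ x ∈ T, I x ∈ Sp := by
    intro x hx
    simp only [hT, hFp, Finset.mem_filter, Finset.mem_univ, true_and] at hx
    obtain ⟨hx1, hx2⟩ := hx
    simp only [hSp, Finset.mem_filter, Finset.mem_univ, true_and]
    rw [hconj x, hx1]
    intro hAI
    exact hx2 ((hc.sgfix_iff x).2 hAI.symm)
  have hcard2 : T.card ≤ Sp.card :=
    Finset.card_le_card_of_injOn (fun x => I x) hmapsto
      (fun x _ y _ h => I.injective h)
  have hTk : T.card = k := le_antisymm (by omega) hTcard
  have himg : T.image (fun x => I x) = Sp := by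
    apply Finset.eq_of_subset_of_card_le
    · intro y hy
      obtain ⟨x, hx, rfl⟩ := Finset.mem_image.1 hy
      exact hmapsto x hx
    · rw [Finset.card_image_of_injective _ I.injective, hTk, hSpk]
  have hpi : ∀ y ∈ Sp, π y = (A * I) y := by
    intro y hy
    rw [← himg] at hy
    obtain ⟨x, hxT, rfl⟩ := Finset.mem_image.1 hy
    simp only [hT, hFp, Finset.mem_filter, Finset.mem_univ, true_and] at hxT
    calc π (I x) = A (π x) := hconj x
    _ = A x := by rw [hxT.1]
    _ = (A * I) (I x) := hc.A_eq x
  have hSpmem : ∀ y, y ∈ Sp ↔ π y ≠ y := by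
    intro y
    simp [hSp]
  refine ⟨⟨?_, ?_, ?_⟩, ?_⟩
  · intro y hy
    rw [← hpi y hy]
    exact (hSpmem y).1 hy
  · intro y hy
    rw [← hpi y hy]
    rw [hSpmem] at hy ⊢
    intro h
    exact hy (π.injective h)
  · intro x hσ
    constructor
    · intro hx
      rw [← himg] at hx
      obtain ⟨x₀, hx₀, hx₀e⟩ := Finset.mem_image.1 hx
      simp only [hT, hFp, Finset.mem_filter, Finset.mem_univ, true_and] at hx₀
      rw [hSpmem]
      intro hcon
      apply hcon
      have : I x = x₀ := by rw [← hx₀e, hc.II]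
      rw [this, hx₀.1]
    · intro hx
      have hIfix : π (I x) = I x := by
        by_contra hne
        exact hx ((hSpmem (I x)).2 hne)
      have hIT : I x ∈ T := by
        simp only [hT, hFp, Finset.mem_filter, Finset.mem_univ, true_and]
        exact ⟨hIfix, sg_fix_I hc hσ⟩
      rw [← himg]
      exact Finset.mem_image.2 ⟨I x, hIT, hc.II x⟩
  · intro x hx
    exact hpi x ((hSpmem x).2 hx)


lemma zpow_succ_apply (P : Equiv.Perm α) (t : ℤ) (x : α) :
    (P ^ (t + 1)) x = P ((P ^ t) x) := by
  have h : t + 1 = 1 + t := by omega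
  rw [h, zpow_one_add, Equiv.Perm.mul_apply]

lemma zpow_pred_apply (P : Equiv.Perm α) (t : ℤ) (x : α) :
    (P ^ (t - 1)) x = P⁻¹ ((P ^ t) x) := by
  have h : t - 1 = -1 + t := by omega
  rw [h, zpow_add, zpow_neg_one, Equiv.Perm.mul_apply]

lemma piS_inv_apply_mem {S : Finset α} (hS : GoodS I A S) {y : α} (hy : y ∈ S) :
    (piS I A S hS)⁻¹ y = (A * I)⁻¹ y := by
  apply (piS I A S hS).injective
  rw [← Equiv.Perm.mul_apply, mul_inv_cancel, Equiv.Perm.one_apply, piS_apply_mem hS (hS.inv_mem y hy)]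
  simp

lemma piS_zpow {S : Finset α} (hS : GoodS I A S) {x : α} (hx : x ∈ S) (t : ℤ) :
    ((piS I A S hS) ^ t) x = ((A * I) ^ t) x ∧ ((A * I) ^ t) x ∈ S := by
  induction t using Int.induction_on with
  | zero => simpa using hx
  | succ t ih =>
    rw [zpow_succ_apply, zpow_succ_apply, ih.1]
    exact ⟨piS_apply_mem hS ih.2, hS.2.1 _ ih.2⟩
  | pred t ih =>
    have h : (-(t : ℤ) - 1) = (-(t : ℤ)) - 1 := rfl
    rw [h, zpow_pred_apply, zpow_pred_apply, ih.1]
    exact ⟨piS_inv_apply_mem hS ih.2, hS.inv_mem _ ih.2⟩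

lemma piS_Zorb {S : Finset α} (hS : GoodS I A S) {x : α} (hx : x ∈ S) :
    Zorb (piS I A S hS) x = Zorb (A * I) x := by
  ext y
  rw [mem_Zorb, mem_Zorb]
  constructor
  · rintro ⟨t, rfl⟩
    exact ⟨t, ((piS_zpow hS hx t).1).symm⟩
  · rintro ⟨t, rfl⟩
    exact ⟨t, (piS_zpow hS hx t).1⟩

lemma Zorb_sub_S {S : Finset α} (hS : GoodS I A S) {x : α} (hx : x ∈ S) :
    ∀ y ∈ Zorb (A * I) x, y ∈ S := by
  intro y hy
  obtain ⟨t, rfl⟩ := mem_Zorb.1 hy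
  exact (piS_zpow hS hx t).2

lemma rel_mem_S (hc : MCtx I A) {S : Finset α} (hS : GoodS I A S) {x y : α}
    (hx : x ∈ S) (hy : y ∈ S) (h : MRel I A x y) : y ∈ Zorb (A * I) x := by
  rcases rel_cases h with h' | h'
  · exact h'
  · exfalso
    have hIx : I x ∈ S := by
      apply Zorb_sub_S hS hy
      rw [← Zorb_eq_of_mem h']
      exact self_mem_Zorb
    exact ((hS.2.2 x (hS.1 x hx)).1 hx) hIx

lemma out_mem_Zorb (P : Equiv.Perm α) (y : α) :
    (Quotient.mk (MulAction.orbitRel (Subgroup.zpowers P) α) y).out ∈ Zorb P y := by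
  have h := Quotient.exact
    (Quotient.out_eq (Quotient.mk (MulAction.orbitRel (Subgroup.zpowers P) α) y))
  exact MulAction.orbitRel_apply.1 h

lemma piS_orbitSizes_filter (hc : MCtx I A) {S : Finset α} (hS : GoodS I A S) :
    (orbitSizes (Subgroup.zpowers (piS I A S hS))).filter (fun m => m ≠ 1)
      = (Finset.univ : Finset (BigQ I A)).val.map (fun q => zsize (A * I) q.1.out) := by
  set π := piS I A S hS with hπ
  rw [orbitSizes_eq, Multiset.filter_map]
  have hfv : Multiset.filter ((fun m => m ≠ 1) ∘
      fun c : Quotient (MulAction.orbitRel (Subgroup.zpowers π) α) =>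
        Nat.card (MulAction.orbit (Subgroup.zpowers π) c.out)) Finset.univ.val
      = (Finset.univ.filter
        (fun c : Quotient (MulAction.orbitRel (Subgroup.zpowers π) α) =>
          Nat.card (MulAction.orbit (Subgroup.zpowers π) c.out) ≠ 1)).val := by
    rw [Finset.filter_val]
    rfl
  rw [hfv]
  have hqout_nf : ∀ q : BigQ I A, (A * I) q.1.out ≠ q.1.out :=
    fun q h => q.2 ((msmall_iff hc _).2 h)
  set pick : BigQ I A → α := fun q => if q.1.out ∈ S then q.1.out else I q.1.out with hpick
  have hpick_mem : ∀ q, pick q ∈ S := by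
    intro q
    rw [hpick]
    by_cases h : q.1.out ∈ S
    · simpa [h] using h
    · simp only [h, if_false]
      by_contra hne
      exact h ((hS.2.2 _ (hqout_nf q)).2 hne)
  have hpick_rel : ∀ q, MRel I A q.1.out (pick q) := by
    intro q
    rw [hpick]
    by_cases h : q.1.out ∈ S
    · simpa [h] using MRel.refl _
    · simp only [h, if_false]
      exact (MRel.refl _).appI hc
  set j2 : BigQ I A → Quotient (MulAction.orbitRel (Subgroup.zpowers π) α) :=
    fun q => Quotient.mk _ (pick q) with hj2
  have hinj : Function.Injective j2 := by
    intro q1 q2 h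
    rw [hj2] at h
    have hrel : pick q1 ∈ Zorb π (pick q2) := MulAction.orbitRel_apply.1 (Quotient.exact h)
    rw [piS_Zorb hS (hpick_mem q2)] at hrel
    have hm : MRel I A q2.1.out q1.1.out :=
      MRel.trans hc (MRel.trans hc (hpick_rel q2) (rel_of_mem_Zorb hrel))
        (MRel.symm hc (hpick_rel q1))
    have hq : q1.1 = q2.1 := by
      rw [← Quotient.out_eq q1.1, ← Quotient.out_eq q2.1]
      exact Quotient.sound (orbitRel_of_rel hc hm)
    exact Subtype.ext hq
  have himage : ∀ c, Nat.card (MulAction.orbit (Subgroup.zpowers π) c.out) ≠ 1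
      ↔ ∃ q, j2 q = c := by
    intro c
    constructor
    · intro hne
      have hπc : π c.out ≠ c.out := fun h => hne (orbitcard_one_iff.2 h)
      have hcS : c.out ∈ S := (piS_ne_iff hS c.out).1 hπc
      have hσc : (A * I) c.out ≠ c.out := hS.1 _ hcS
      have hbig : Nat.card (MulAction.orbit (Subgroup.closure {I, A})
          (Quotient.mk (MulAction.orbitRel (Subgroup.closure {I, A}) α) c.out).out) ≠ 2 := by
        intro h2
        exact hσc ((rel_fix_iff hc (rel_rep hc c.out)).2 ((msmall_iff hc _).1 h2))
      refine ⟨⟨Quotient.mk _ c.out, hbig⟩, ?_⟩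
      rw [hj2]
      have hrel2 : MRel I A c.out (pick ⟨Quotient.mk _ c.out, hbig⟩) :=
        MRel.trans hc (rel_rep hc c.out) (hpick_rel _)
      have hmem : pick ⟨Quotient.mk _ c.out, hbig⟩ ∈ Zorb (A * I) c.out :=
        rel_mem_S hc hS hcS (hpick_mem _) hrel2
      rw [← piS_Zorb hS hcS] at hmem
      show Quotient.mk _ (pick ⟨Quotient.mk _ c.out, hbig⟩) = c
      conv_rhs => rw [← Quotient.out_eq c]
      exact Quotient.sound (MulAction.orbitRel_apply.2 hmem)
    · rintro ⟨q, rfl⟩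
      have hout : (j2 q).out ∈ Zorb π (pick q) := by
        rw [hj2]
        exact out_mem_Zorb π (pick q)
      rw [piS_Zorb hS (hpick_mem q)] at hout
      have houtS : (j2 q).out ∈ S := Zorb_sub_S hS (hpick_mem q) _ hout
      intro h1
      exact (piS_ne_iff hS _).2 houtS (orbitcard_one_iff.1 h1)
  have hval : ∀ q, Nat.card (MulAction.orbit (Subgroup.zpowers π) (j2 q).out)
      = zsize (A * I) q.1.out := by
    intro q
    have hout : (j2 q).out ∈ Zorb π (pick q) := by
      rw [hj2]
      exact out_mem_Zorb π (pick q)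
    rw [piS_Zorb hS (hpick_mem q)] at hout
    have houtS : (j2 q).out ∈ S := Zorb_sub_S hS (hpick_mem q) _ hout
    rw [Natcard_orbit_zpowers]
    have h1 : zsize π (j2 q).out = zsize (A * I) (j2 q).out := by
      unfold zsize
      rw [piS_Zorb hS houtS]
    rw [h1]
    exact rel_zsize hc (MRel.trans hc (hpick_rel q) (rel_of_mem_Zorb hout))
  have hemb : (Finset.univ : Finset (BigQ I A)).map ⟨j2, hinj⟩
      = Finset.univ.filter
        (fun c : Quotient (MulAction.orbitRel (Subgroup.zpowers π) α) =>
          Nat.card (MulAction.orbit (Subgroup.zpowers π) c.out) ≠ 1) := by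
    ext c
    simp only [Finset.mem_map, Finset.mem_univ, true_and, Function.Embedding.coeFn_mk,
      Finset.mem_filter]
    exact ⟨fun ⟨q, hq⟩ => (himage c).2 ⟨q, hq⟩, fun h => (himage c).1 h⟩
  rw [← hemb, Finset.map_val, Multiset.map_map]
  apply Multiset.map_congr rfl
  intro q _
  exact hval q


lemma mk_sg (x : α) : Quotient.mk (MulAction.orbitRel (Subgroup.closure {I, A}) α) ((A * I) x)
    = Quotient.mk (MulAction.orbitRel (Subgroup.closure {I, A}) α) x :=
  Quotient.sound (MulAction.orbitRel_apply.2 ⟨⟨A * I, mem_closure_sg⟩, rfl⟩)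

lemma mk_I (x : α) : Quotient.mk (MulAction.orbitRel (Subgroup.closure {I, A}) α) (I x)
    = Quotient.mk (MulAction.orbitRel (Subgroup.closure {I, A}) α) x :=
  Quotient.sound (MulAction.orbitRel_apply.2 ⟨⟨I, mem_closure_I⟩, rfl⟩)

lemma big_of_nonfix (hc : MCtx I A) {x : α} (h : (A * I) x ≠ x) :
    Nat.card (MulAction.orbit (Subgroup.closure {I, A})
      (Quotient.mk (MulAction.orbitRel (Subgroup.closure {I, A}) α) x).out) ≠ 2 := by
  intro h2
  exact h ((rel_fix_iff hc (rel_rep hc x)).2 ((msmall_iff hc _).1 h2))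

/-- The representative of the `G`-class. -/
noncomputable def repG (I A : Equiv.Perm α) (x : α) : α :=
  (Quotient.mk (MulAction.orbitRel (Subgroup.closure {I, A}) α) x).out

lemma rep_split (hc : MCtx I A) (x : α) :
    x ∈ Zorb (A * I) (repG I A x) ∨ x ∈ Zorb (A * I) (I (repG I A x)) :=
  rel_cases (MRel.symm hc (rel_rep hc x))

lemma rep_not_both (hc : MCtx I A) (x : α) :
    ¬(x ∈ Zorb (A * I) (repG I A x) ∧ x ∈ Zorb (A * I) (I (repG I A x))) := by
  rintro ⟨h1, h2⟩
  exact Set.disjoint_left.1 (Zorb_disj hc (repG I A x)) h1 h2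

/-- The key exclusivity: exactly one of `x`, `I x` lies on the cycle of the representative. -/
lemma key_xor (hc : MCtx I A) {x : α} :
    x ∈ Zorb (A * I) (repG I A x) ↔ ¬(I x ∈ Zorb (A * I) (repG I A x)) := by
  constructor
  · intro h1 h2
    have hz : Zorb (A * I) (repG I A x) = Zorb (A * I) x := Zorb_eq_of_mem h1
    rw [hz] at h2
    exact Set.disjoint_left.1 (Zorb_disj hc x) h2 self_mem_Zorb
  · intro h2
    rcases rep_split hc x with h | h
    · exact h
    · exfalso
      apply h2
      have := Set.mem_image_of_mem I h
      rw [I_image_Zorb hc, hc.II] at this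
      exact this


lemma repG_congr {x y : α}
    (h : Quotient.mk (MulAction.orbitRel (Subgroup.closure {I, A}) α) x
       = Quotient.mk (MulAction.orbitRel (Subgroup.closure {I, A}) α) y) :
    repG I A x = repG I A y := by
  unfold repG
  rw [h]

lemma repG_nonfix (hc : MCtx I A) {x : α} (h : (A * I) x ≠ x) :
    (A * I) (repG I A x) ≠ repG I A x := by
  intro hfix
  exact h ((rel_fix_iff hc (rel_rep hc x)).2 hfix)

/-- The candidate good set attached to a choice function. -/
noncomputable def Sf (I A : Equiv.Perm α) (f : BigQ I A → Bool) : Finset α :=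
  Finset.univ.filter (fun x => (A * I) x ≠ x ∧
    ((x ∈ Zorb (A * I) (repG I A x)) ↔
      (∀ q : BigQ I A, q.1 = Quotient.mk (MulAction.orbitRel (Subgroup.closure {I, A}) α) x →
        f q = true)))

lemma mem_Sf {f : BigQ I A → Bool} {x : α} :
    x ∈ Sf I A f ↔ ((A * I) x ≠ x ∧
    ((x ∈ Zorb (A * I) (repG I A x)) ↔
      (∀ q : BigQ I A, q.1 = Quotient.mk (MulAction.orbitRel (Subgroup.closure {I, A}) α) x →
        f q = true))) := by
  unfold Sf
  simp

lemma goodS_Sf (hc : MCtx I A) (f : BigQ I A → Bool) : GoodS I A (Sf I A f) := by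
  refine ⟨fun x hx => (mem_Sf.1 hx).1, ?_, ?_⟩
  · intro x hx
    obtain ⟨h1, h2⟩ := mem_Sf.1 hx
    rw [mem_Sf]
    refine ⟨fun h => h1 ((A * I).injective h), ?_⟩
    rw [repG_congr (mk_sg x), mk_sg x, apply_mem_Zorb_iff]
    exact h2
  · intro x hσ
    have hIσ : (A * I) (I x) ≠ I x := sg_fix_I hc hσ
    rw [mem_Sf, mem_Sf]
    rw [repG_congr (mk_I x), mk_I x]
    rcases (em (x ∈ Zorb (A * I) (repG I A x))) with hin | hin
    · have hInot : ¬(I x ∈ Zorb (A * I) (repG I A x)) := (key_xor hc).1 hin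
      simp only [hσ, hIσ, hin, hInot, ne_eq, not_false_eq_true, true_and, iff_true,
        false_iff]
      tauto
    · have hIin : I x ∈ Zorb (A * I) (repG I A x) := by
        by_contra hInot
        exact hin ((key_xor hc).2 hInot)
      simp only [hσ, hIσ, hin, hIin, ne_eq, not_false_eq_true, true_and, iff_true,
        false_iff]
      tauto

/-- The bijection between good sets and choice functions. -/
noncomputable def goodS_equiv (hc : MCtx I A) :
    {S : Finset α // GoodS I A S} ≃ (BigQ I A → Bool) where
  toFun S := fun q => decide (q.1.out ∈ S.1)
  invFun f := ⟨Sf I A f, goodS_Sf hc f⟩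
  left_inv := by
    rintro ⟨S, hS⟩
    apply Subtype.ext
    ext x
    show x ∈ Sf I A _ ↔ x ∈ S
    rw [mem_Sf]
    by_cases hσ : (A * I) x = x
    · simp only [hσ, ne_eq, not_true_eq_false, false_and, false_iff]
      exact fun hx => hS.1 x hx hσ
    · have hout : (Quotient.mk (MulAction.orbitRel (Subgroup.closure {I, A}) α) x).out
          = repG I A x := rfl
      have hC : (∀ q : BigQ I A,
          q.1 = Quotient.mk (MulAction.orbitRel (Subgroup.closure {I, A}) α) x →
          decide (q.1.out ∈ S) = true) ↔ repG I A x ∈ S := by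
        constructor
        · intro h
          have := h ⟨Quotient.mk _ x, big_of_nonfix hc hσ⟩ rfl
          exact of_decide_eq_true this
        · intro h q hq
          have : q.1.out = repG I A x := by rw [hq]; rfl
          rw [this]
          simpa using h
      rw [hC]
      have hrel := rel_rep hc x
      have hσr : (A * I) (repG I A x) ≠ repG I A x := repG_nonfix hc hσ
      rcases rep_split hc x with hin | hin
      · have h1 : repG I A x ∈ S → x ∈ S := fun h => Zorb_sub_S hS h x hin
        have h2 : x ∈ S → repG I A x ∈ S := by
          intro h
          have : repG I A x ∈ Zorb (A * I) x := by
            rw [← Zorb_eq_of_mem hin]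
            exact self_mem_Zorb
          exact Zorb_sub_S hS h _ this
        constructor
        · rintro ⟨-, hiff⟩
          exact h1 (hiff.1 hin)
        · intro hx
          exact ⟨hσ, by simp [hin, h2 hx]⟩
      · have hnotin : ¬ x ∈ Zorb (A * I) (repG I A x) := by
          intro h
          exact rep_not_both hc x ⟨h, hin⟩
        have h1 : x ∈ S → ¬ repG I A x ∈ S := by
          intro hx hr
          have hIr : I (repG I A x) ∈ S := by
            apply Zorb_sub_S hS hx
            rw [← Zorb_eq_of_mem hin]
            exact self_mem_Zorb
          exact ((hS.2.2 _ hσr).1 hr) hIr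
        have h2 : ¬ repG I A x ∈ S → x ∈ S := by
          intro hr
          have hIr : I (repG I A x) ∈ S := by
            by_contra hne
            exact hr ((hS.2.2 _ hσr).2 hne)
          exact Zorb_sub_S hS hIr x hin
        constructor
        · rintro ⟨-, hiff⟩
          by_contra hx
          have hr : repG I A x ∈ S := by
            by_contra hr
            exact hx (h2 hr)
          exact hnotin (hiff.2 hr)
        · intro hx
          refine ⟨hσ, ?_⟩
          simp only [hnotin, false_iff]
          exact h1 hx
  right_inv := by
    intro f
    funext q
    have hσz : (A * I) q.1.out ≠ q.1.out := fun h => q.2 ((msmall_iff hc _).2 h)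
    have hrep : repG I A q.1.out = q.1.out := by
      unfold repG
      rw [Quotient.out_eq]
    have hmem : q.1.out ∈ Sf I A f ↔ f q = true := by
      rw [mem_Sf, hrep]
      constructor
      · rintro ⟨-, hiff⟩
        exact hiff.1 self_mem_Zorb q (Quotient.out_eq q.1).symm
      · intro hf
        refine ⟨hσz, ?_⟩
        simp only [self_mem_Zorb, true_iff]
        intro q' hq'
        have : q' = q := by
          apply Subtype.ext
          rw [hq', Quotient.out_eq]
        rw [this]
        exact hf
    cases hfq : f q with
    | false =>
      rw [hfq] at hmem
      simp only [Bool.false_eq_true, iff_false] at hmem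
      simpa using hmem
    | true =>
      rw [hfq] at hmem
      simp only [iff_true] at hmem
      simpa using hmem

theorem count_conjugators_of_cycleType (μ : Multiset ℕ) (hμ : ∀ i ∈ μ, 2 ≤ i)
    (k n : ℕ) (hk : μ.sum = k) (hn : k ≤ n)
    (I A : PerfMatching (2 * n))
    (hd : dMatch I.1 A.1 = twice (μ + Multiset.replicate (n - k) 1)) :
    Nat.card {π : Equiv.Perm (Fin (2 * n)) //
        permOrbitSizes π = μ + Multiset.replicate (2 * n - k) 1 ∧
        π * I.1 * π⁻¹ = A.1} = 2 ^ (Multiset.card μ) := by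
  classical
  set J := I.1 with hJdef
  set B := A.1 with hBdef
  have hc : MCtx J B := ⟨I.2.1, I.2.2, A.2.1, A.2.2⟩
  have hk2n : k ≤ 2 * n := by omega
  have hOS : orbitSizes (Subgroup.closure {J, B})
      = Multiset.map (fun i => 2 * i) μ + Multiset.replicate (n - k) 2 := by
    have : dMatch J B = orbitSizes (Subgroup.closure {J, B}) := rfl
    rw [← this, hd]
    unfold twice
    rw [Multiset.map_add, Multiset.map_replicate]
  have hcount2 : (orbitSizes (Subgroup.closure {J, B})).count 2 = n - k := by
    rw [hOS, Multiset.count_add, Multiset.count_replicate]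
    have h0 : (Multiset.map (fun i => 2 * i) μ).count 2 = 0 := by
      rw [Multiset.count_eq_zero]
      intro hmem
      obtain ⟨i, hi, h2⟩ := Multiset.mem_map.1 hmem
      have := hμ i hi
      omega
    simp [h0]
  have hfixσ : (Finset.univ.filter fun x => (B * J) x = x).card = 2 * (n - k) := by
    rw [fixsg_card hc, hcount2]
  have hfilter : (orbitSizes (Subgroup.closure {J, B})).filter (fun m => m ≠ 2)
      = Multiset.map (fun i => 2 * i) μ := by
    rw [hOS, Multiset.filter_add]
    have h1 : (Multiset.map (fun i => 2 * i) μ).filter (fun m => m ≠ 2)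
        = Multiset.map (fun i => 2 * i) μ := by
      rw [Multiset.filter_eq_self]
      intro a ha
      obtain ⟨i, hi, rfl⟩ := Multiset.mem_map.1 ha
      have := hμ i hi
      omega
    have h2 : (Multiset.replicate (n - k) 2).filter (fun m => m ≠ 2) = 0 := by
      rw [Multiset.filter_eq_nil]
      intro a ha
      rw [Multiset.eq_of_mem_replicate ha]
      simp
    rw [h1, h2, add_zero]
  have hBig : (Finset.univ : Finset (BigQ J B)).val.map (fun q => zsize (B * J) q.1.out)
      = μ := by
    have h := big_part hc
    rw [hfilter] at h
    have h2 : Multiset.map (fun i => 2 * i)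
        ((Finset.univ : Finset (BigQ J B)).val.map (fun q => zsize (B * J) q.1.out))
        = Multiset.map (fun i => 2 * i) μ := by
      rw [Multiset.map_map]
      exact h
    exact Multiset.map_injective (fun a b hab => by omega) h2
  have hcardQ : Nat.card (BigQ J B) = Multiset.card μ := by
    rw [← hBig, Multiset.card_map, Nat.card_eq_fintype_card]
    rfl
  have hforward : ∀ π : Equiv.Perm (Fin (2 * n)),
      permOrbitSizes π = μ + Multiset.replicate (2 * n - k) 1 → π * J * π⁻¹ = B →
      (GoodS J B (Finset.univ.filter fun x => π x ≠ x) ∧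
        ∀ x, π x ≠ x → π x = (B * J) x) := by
    intro π hcyc hconj
    apply forward (k := k) hc
    · have h1 := count_one_orbitSizes (α := Fin (2 * n)) π
      have h2 : (permOrbitSizes π).count 1 = 2 * n - k := by
        rw [hcyc, Multiset.count_add, Multiset.count_replicate]
        have h0 : μ.count 1 = 0 := by
          rw [Multiset.count_eq_zero]
          intro hmem
          have := hμ 1 hmem
          omega
        simp [h0]
      have h3 : (permOrbitSizes π).count 1
          = (Finset.univ.filter fun x => π x = x).card := h1
      rw [h2] at h3
      rw [← h3]
      simp only [Fintype.card_fin]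
      omega
    · rw [hfixσ]
      simp only [Fintype.card_fin]
      omega
    · intro x
      have h := mul_inv_eq_iff_eq_mul.1 hconj
      have := Equiv.ext_iff.1 h x
      simpa [Equiv.Perm.mul_apply] using this
  have hbackward : ∀ (S : Finset (Fin (2 * n))) (hS : GoodS J B S),
      permOrbitSizes (piS J B S hS) = μ + Multiset.replicate (2 * n - k) 1 := by
    intro S hS
    have hf : (permOrbitSizes (piS J B S hS)).filter (fun m => m ≠ 1) = μ := by
      have h := piS_orbitSizes_filter hc hS
      rw [hBig] at h
      exact h
    set s := permOrbitSizes (piS J B S hS) with hs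
    have hsplit := Multiset.filter_add_not (fun m => m ≠ 1) s
    have hneg : Multiset.filter (fun m => ¬m ≠ 1) s = Multiset.filter (fun m => m = 1) s :=
      Multiset.filter_congr (fun m _ => by tauto)
    have heq1 : Multiset.filter (fun m => m = 1) s = Multiset.replicate (s.count 1) 1 :=
      Multiset.filter_eq' s 1
    have hsum : s.sum = 2 * n := by
      rw [hs]
      show (orbitSizes _).sum = _
      rw [orbitSizes_sum]
      simp
    have hcnt : s.count 1 = 2 * n - k := by
      have hss := congrArg Multiset.sum hsplit
      rw [Multiset.sum_add, hneg, heq1, hf, Multiset.sum_replicate, smul_eq_mul, mul_one,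
        hk, hsum] at hss
      omega
    calc s = Multiset.filter (fun m => m ≠ 1) s + Multiset.filter (fun m => ¬m ≠ 1) s :=
      hsplit.symm
    _ = μ + Multiset.replicate (2 * n - k) 1 := by
      rw [hf, hneg, heq1, hcnt]
  have e1 : {π : Equiv.Perm (Fin (2 * n)) //
      permOrbitSizes π = μ + Multiset.replicate (2 * n - k) 1 ∧ π * J * π⁻¹ = B}
      ≃ {S : Finset (Fin (2 * n)) // GoodS J B S} :=
  { toFun := fun p => ⟨Finset.univ.filter (fun x => p.1 x ≠ x),
      (hforward p.1 p.2.1 p.2.2).1⟩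
    invFun := fun Sp => ⟨piS J B Sp.1 Sp.2, hbackward Sp.1 Sp.2, piS_conj hc Sp.2⟩
    left_inv := by
      rintro ⟨π, h1, h2⟩
      apply Subtype.ext
      apply Equiv.ext
      intro x
      show piS J B (Finset.univ.filter (fun y => π y ≠ y)) (hforward π h1 h2).1 x = π x
      by_cases h : π x = x
      · rw [piS_apply_not_mem _ (by simp [h]), h]
      · rw [piS_apply_mem _ (by simp [h])]
        exact ((hforward π h1 h2).2 x h).symm
    right_inv := by
      rintro ⟨S, hS⟩
      apply Subtype.ext
      ext x
      simp only [Finset.mem_filter, Finset.mem_univ, true_and]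
      exact piS_ne_iff hS x }
  rw [Nat.card_congr e1, Nat.card_congr (goodS_equiv hc), Nat.card_fun, hcardQ]
  norm_num

end Aux
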